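/- For every integer s ≥ 2 and every integer p ≥ 1, the real power series ∑_{n≥0} R_{s,p}(n)·t^n has radius of convergence exactly ζ_c: the series converges for every real t with |t| < ζ_c and diverges for every real t with |t| > ζ_c. -/

import Mathlib

/-- Raney number `R_{s,p}(n) = (p/(s·n+p))·C(s·n+p, n)` as a real number. -/
noncomputable def raney (s p n : ℕ) : ℝ :=
  (p : ℝ) / (s * n + p) * (Nat.choose (s * n + p) n : ℝ)

/-- The analytic threshold `ζ_c = (s-1)^{s-1}/s^s`. -/
noncomputable def zetaC (s : ℕ) : ℝ := ((s : ℝ) - 1) ^ (s - 1) / (s : ℝ) ^ s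

open Filter Finset Nat Topology

lemma raney_pos (s p n : ℕ) (hs : 1 ≤ s) (hp : 1 ≤ p) : 0 < raney s p n := by
  have h1 : (0:ℝ) < ((s * n + p : ℕ) : ℝ) := by
    have : 0 < s * n + p := by positivity
    exact_mod_cast this
  have h2 : 0 < Nat.choose (s * n + p) n := by
    apply Nat.choose_pos
    nlinarith [Nat.zero_le ((s-1) * n)]
  rw [raney]
  push_cast
  apply mul_pos
  · apply _root_.div_pos
    · exact_mod_cast Nat.lt_of_lt_of_le Nat.zero_lt_one hp
    · exact_mod_cast h1
  · exact_mod_cast h2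

lemma fact_cast_add (n k : ℕ) :
    (((n + k)! : ℕ) : ℝ) = ((n ! : ℕ) : ℝ) * ∏ j ∈ range k, ((n:ℝ) + 1 + j) := by
  induction k with
  | zero => simp
  | succ k ih =>
      rw [show n + (k+1) = (n+k) + 1 from rfl, Nat.factorial_succ, prod_range_succ]
      push_cast [ih]; ring

lemma raney_cast (m p n : ℕ) (hp : 1 ≤ p) :
    raney (m+1) p n =
      p * ((((m+1)*n+p)! : ℕ) : ℝ) /
        ((((m+1)*n+p : ℕ) : ℝ) * ((n ! : ℕ) : ℝ) * (((m*n+p)! : ℕ) : ℝ)) := by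
  have hle : n ≤ (m+1)*n + p := by nlinarith [Nat.zero_le (m*n)]
  have hsub : (m+1)*n + p - n = m*n + p := by rw [Nat.succ_mul]; omega
  rw [raney, Nat.cast_choose ℝ hle, hsub]
  have h1 : (0:ℝ) < (((m+1)*n+p : ℕ) : ℝ) := by
    have : 0 < (m+1)*n+p := by positivity
    exact_mod_cast this
  have h2 : ((n ! : ℕ) : ℝ) ≠ 0 := by exact_mod_cast n.factorial_ne_zero
  have h3 : (((m*n+p)! : ℕ) : ℝ) ≠ 0 := by exact_mod_cast (m*n+p).factorial_ne_zero
  field_simp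
  push_cast
  ring


lemma raney_ratio (m p n : ℕ) (hm : 1 ≤ m) (hp : 1 ≤ p) :
    raney (m+1) p (n+1) = raney (m+1) p n *
      ((((m:ℝ)+1)*n+p) * ∏ j ∈ range (m+1), (((m:ℝ)+1)*n+p+1+j)) /
      (((((m:ℝ)+1)*n+p) + (m+1)) * ((n:ℝ)+1) * ∏ j ∈ range m, ((m:ℝ)*n+p+1+j)) := by
  have e1 : (m+1)*(n+1)+p = ((m+1)*n+p) + (m+1) := by ring
  have e2 : m*(n+1)+p = (m*n+p) + m := by ring
  rw [raney_cast m p (n+1) hp, raney_cast m p n hp, e1, e2,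
    fact_cast_add ((m+1)*n+p) (m+1), fact_cast_add (m*n+p) m, Nat.factorial_succ]
  have hP : (0:ℝ) < ∏ j ∈ range (m+1), (((m:ℝ)+1)*n+p+1+j) := by
    apply Finset.prod_pos; intro j _; positivity
  have hQ : (0:ℝ) < ∏ j ∈ range m, ((m:ℝ)*n+p+1+j) := by
    apply Finset.prod_pos; intro j _; positivity
  have hp' : (0:ℝ) < p := by exact_mod_cast hp
  have h2 : ((n ! : ℕ) : ℝ) ≠ 0 := by exact_mod_cast n.factorial_ne_zero
  have h3 : (((m*n+p)! : ℕ) : ℝ) ≠ 0 := by exact_mod_cast (m*n+p).factorial_ne_zero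
  have h4 : ((((m+1)*n+p)! : ℕ) : ℝ) ≠ 0 := by exact_mod_cast ((m+1)*n+p).factorial_ne_zero
  push_cast
  field_simp
lemma tendsto_linear (c d : ℝ) :
    Tendsto (fun n : ℕ => (c * n + d) / ((n:ℝ) + 1)) atTop (𝓝 c) := by
  have heq : ∀ n : ℕ, (c * n + d) / ((n:ℝ) + 1) = c + (d - c) * (1 / ((n:ℝ) + 1)) := by
    intro n
    have : ((n:ℝ) + 1) ≠ 0 := by positivity
    field_simp
    ring
  simp only [heq]
  have := tendsto_one_div_add_atTop_nhds_zero_nat (𝕜 := ℝ)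
  have h2 : Tendsto (fun n : ℕ => (d - c) * (1 / ((n:ℝ) + 1))) atTop (𝓝 0) := by
    simpa using this.const_mul (d - c)
  simpa using tendsto_const_nhds.add h2

lemma tendsto_linear' (c d : ℝ) (j : ℕ) :
    Tendsto (fun n : ℕ => (c * n + d + 1 + (j:ℝ)) / ((n:ℝ) + 1)) atTop (𝓝 c) := by
  have : (fun n : ℕ => (c * n + d + 1 + (j:ℝ)) / ((n:ℝ) + 1))
      = fun n : ℕ => (c * n + (d + 1 + (j:ℝ))) / ((n:ℝ) + 1) := by
    funext n; congr 1; ring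
  rw [this]; exact tendsto_linear c (d + 1 + (j:ℝ))

lemma tendsto_XY (m p : ℕ) (hm : 1 ≤ m) (hp : 1 ≤ p) :
    Tendsto (fun n : ℕ =>
      ((((m:ℝ)+1)*n+p) * ∏ j ∈ range (m+1), (((m:ℝ)+1)*n+p+1+j)) /
      (((((m:ℝ)+1)*n+p) + ((m:ℝ)+1)) * ((n:ℝ)+1) * ∏ j ∈ range m, ((m:ℝ)*n+p+1+j)))
    atTop (𝓝 (((m:ℝ)+1)^(m+1) / (m:ℝ)^m)) := by
  have hm1 : (0:ℝ) < (m:ℝ) := by exact_mod_cast hm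
  -- the rearranged form
  set F : ℕ → ℝ := fun n =>
    (((((m:ℝ)+1)*n+p) / ((n:ℝ)+1)) * ∏ j ∈ range (m+1), ((((m:ℝ)+1)*n+p+1+j) / ((n:ℝ)+1))) /
    (((((m:ℝ)+1)*n+(p+(m:ℝ)+1)) / ((n:ℝ)+1)) * ∏ j ∈ range m, (((m:ℝ)*n+p+1+j) / ((n:ℝ)+1)))
    with hF
  have hnum : Tendsto (fun n : ℕ =>
      ((((m:ℝ)+1)*n+p) / ((n:ℝ)+1)) * ∏ j ∈ range (m+1), ((((m:ℝ)+1)*n+p+1+j) / ((n:ℝ)+1)))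
      atTop (𝓝 (((m:ℝ)+1) * ∏ _j ∈ range (m+1), ((m:ℝ)+1))) := by
    exact (tendsto_linear ((m:ℝ)+1) p).mul
      (tendsto_finset_prod _ (fun j _ => tendsto_linear' ((m:ℝ)+1) (p:ℝ) j))
  have hden : Tendsto (fun n : ℕ =>
      ((((m:ℝ)+1)*n+(p+(m:ℝ)+1)) / ((n:ℝ)+1)) * ∏ j ∈ range m, (((m:ℝ)*n+p+1+j) / ((n:ℝ)+1)))
      atTop (𝓝 (((m:ℝ)+1) * ∏ _j ∈ range m, (m:ℝ))) := by
    exact (tendsto_linear ((m:ℝ)+1) ((p:ℝ)+(m:ℝ)+1)).mul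
      (tendsto_finset_prod _ (fun j _ => tendsto_linear' (m:ℝ) (p:ℝ) j))
  have hden_ne : ((m:ℝ)+1) * ∏ _j ∈ range m, (m:ℝ) ≠ 0 := by
    simp only [prod_const, card_range]
    positivity
  have hFt : Tendsto F atTop (𝓝 ((((m:ℝ)+1) * ∏ _j ∈ range (m+1), ((m:ℝ)+1)) /
      (((m:ℝ)+1) * ∏ _j ∈ range m, (m:ℝ)))) := hnum.div hden hden_ne
  have hlim : (((m:ℝ)+1) * ∏ _j ∈ range (m+1), ((m:ℝ)+1)) /
      (((m:ℝ)+1) * ∏ _j ∈ range m, (m:ℝ)) = ((m:ℝ)+1)^(m+1) / (m:ℝ)^m := by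
    simp only [prod_const, card_range]
    rw [mul_div_mul_left]
    positivity
  rw [hlim] at hFt
  refine hFt.congr (fun n => ?_)
  have h1 : ((n:ℝ)+1) ≠ 0 := by positivity
  have hp1 : (0:ℝ) < (p:ℝ) := by exact_mod_cast hp
  have hQ : (0:ℝ) < ∏ j ∈ range m, ((m:ℝ)*n+p+1+j) := by
    apply Finset.prod_pos; intro j _; positivity
  have hD : (0:ℝ) < (((m:ℝ)+1)*n+p) + ((m:ℝ)+1) := by positivity
  rw [hF]
  simp only [Finset.prod_div_distrib, Finset.prod_const, Finset.card_range]
  field_simp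
  ring

lemma tendsto_norm_ratio (m p : ℕ) (hm : 1 ≤ m) (hp : 1 ≤ p) {t : ℝ} (ht : t ≠ 0) :
    Tendsto (fun n : ℕ =>
        ‖raney (m+1) p (n+1) * t^(n+1)‖ / ‖raney (m+1) p n * t^n‖) atTop
      (𝓝 (|t| * (((m:ℝ)+1)^(m+1) / (m:ℝ)^m))) := by
  have h := (tendsto_XY m p hm hp).const_mul |t|
  refine h.congr (fun n => ?_)
  have hr1 : 0 < raney (m+1) p (n+1) := raney_pos (m+1) p (n+1) (by omega) hp
  have hr0 : 0 < raney (m+1) p n := raney_pos (m+1) p n (by omega) hp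
  have htp : (0:ℝ) < |t| := abs_pos.mpr ht
  have hp1 : (0:ℝ) < (p:ℝ) := by exact_mod_cast hp
  have hQ : (0:ℝ) < ∏ j ∈ range m, ((m:ℝ)*n+p+1+j) := by
    apply Finset.prod_pos; intro j _; positivity
  have hP : (0:ℝ) < ∏ j ∈ range (m+1), (((m:ℝ)+1)*n+p+1+j) := by
    apply Finset.prod_pos; intro j _; positivity
  have hD : (0:ℝ) < (((m:ℝ)+1)*n+p) + ((m:ℝ)+1) := by positivity
  have hA : (0:ℝ) < (((m:ℝ)+1)*n+p) := by positivity
  have h1 : ((n:ℝ)+1) ≠ 0 := by positivity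
  rw [norm_mul, norm_mul, norm_pow, norm_pow, Real.norm_eq_abs,
    Real.norm_eq_abs, Real.norm_eq_abs, abs_of_pos hr1, abs_of_pos hr0,
    raney_ratio m p n hm hp, pow_succ]
  field_simp

/-- The power series `∑ R_{s,p}(n) t^n` has radius of convergence exactly `ζ_c`:
it converges for `|t| < ζ_c` and diverges for `|t| > ζ_c`. -/
theorem stmt3 (s p : ℕ) (hs : 2 ≤ s) (hp : 1 ≤ p) :
    (∀ t : ℝ, |t| < zetaC s → Summable (fun n : ℕ => raney s p n * t ^ n)) ∧
    (∀ t : ℝ, zetaC s < |t| → ¬ Summable (fun n : ℕ => raney s p n * t ^ n)) := by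
  obtain ⟨m, rfl⟩ : ∃ m, s = m + 1 := ⟨s - 1, by omega⟩
  have hm : 1 ≤ m := by omega
  have hm1 : (0:ℝ) < (m:ℝ) := by exact_mod_cast hm
  have hz : zetaC (m+1) = (m:ℝ)^m / ((m:ℝ)+1)^(m+1) := by
    rw [zetaC, Nat.add_sub_cancel]
    push_cast
    norm_num
  have hzpos : 0 < zetaC (m+1) := by rw [hz]; positivity
  have hzval : ∀ t : ℝ, |t| * (((m:ℝ)+1)^(m+1) / (m:ℝ)^m) = |t| / zetaC (m+1) := by
    intro t
    rw [hz]
    field_simp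
  constructor
  · intro t ht
    rcases eq_or_ne t 0 with rfl | ht0
    · apply summable_of_ne_finset_zero (s := {0})
      intro n hn
      simp only [Finset.mem_singleton] at hn
      simp [zero_pow hn]
    · apply summable_of_ratio_test_tendsto_lt_one
        (l := |t| * (((m:ℝ)+1)^(m+1) / (m:ℝ)^m))
      · rw [hzval t]
        exact (div_lt_one hzpos).mpr ht
      · refine Eventually.of_forall (fun n => ?_)
        exact mul_ne_zero (raney_pos (m+1) p n (by omega) hp).ne' (pow_ne_zero n ht0)
      · exact tendsto_norm_ratio m p hm hp ht0
  · intro t ht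
    have ht0 : t ≠ 0 := by
      intro h; rw [h] at ht; simp at ht; linarith
    apply not_summable_of_ratio_test_tendsto_gt_one
      (l := |t| * (((m:ℝ)+1)^(m+1) / (m:ℝ)^m))
    · rw [hzval t]
      exact (one_lt_div hzpos).mpr ht
    · exact tendsto_norm_ratio m p hm hp ht0
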